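/- Let λ > 0, C ≥ 0 and s ≥ 0. Let A : [s,∞) → Matrix(r,r,ℝ) be continuous with ⟨v, A(t) v⟩ ≤ −λ ‖v‖^2 for all t ≥ s and v ∈ ℝ^r, and let G : [s,∞) → Matrix(m,r,ℝ) be continuous with ‖G(t)‖_F ≤ C e^{−2λ(t−s)} for all t ≥ s. Let H : [s,∞) → Matrix(m,r,ℝ) be differentiable with H(s) = 0 and H'(t) = G(t) + H(t) · A(t) for all t ≥ s. Then for all t ≥ s, ‖H(t)‖_F ≤ (C/λ) e^{−λ(t−s)}. -/

import Mathlib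

open scoped Matrix
open Set

/-- Decay of the inhomogeneous variational (Hessian) equation: if `⟨v, A(t)v⟩ ≤ −λ‖v‖²`,
`‖G(t)‖_F ≤ C e^{−2λ(t−s)}`, `H(s) = 0` and `H' = G + H·A` on `[s,∞)`, then
`‖H(t)‖_F ≤ (C/λ) e^{−λ(t−s)}`. -/
theorem stmt_11 {r m : ℕ} (lam C s : ℝ) (hlam : 0 < lam) (hC : 0 ≤ C) (hs : 0 ≤ s)
    (A : ℝ → Matrix (Fin r) (Fin r) ℝ) (hA : ContinuousOn A (Set.Ici s))
    (hlog : ∀ t ∈ Set.Ici s, ∀ v : Fin r → ℝ, v ⬝ᵥ (A t).mulVec v ≤ -lam * (v ⬝ᵥ v))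
    (G : ℝ → Matrix (Fin m) (Fin r) ℝ) (hG : ContinuousOn G (Set.Ici s))
    (hGbd : ∀ t ∈ Set.Ici s,
        Real.sqrt (∑ i, ∑ j, (G t i j)^2) ≤ C * Real.exp (-(2*lam*(t-s))))
    (H : ℝ → Matrix (Fin m) (Fin r) ℝ) (hHs : H s = 0)
    (hH : ∀ t ∈ Set.Ici s, ∀ i j,
        HasDerivWithinAt (fun u => H u i j) ((G t + H t * A t) i j) (Set.Ici s) t) :
    ∀ t ∈ Set.Ici s,
      Real.sqrt (∑ i, ∑ j, (H t i j)^2) ≤ (C/lam) * Real.exp (-lam * (t - s)) := by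
  -- setup
  set φ : ℝ → ℝ := fun u => ∑ i, ∑ j, (H u i j)^2 with hφdef
  have hφ0 : ∀ u, 0 ≤ φ u := fun u =>
    Finset.sum_nonneg fun i _ => Finset.sum_nonneg fun j _ => sq_nonneg _
  set φ' : ℝ → ℝ := fun u => ∑ i, ∑ j, 2 * H u i j * ((G u + H u * A u) i j) with hφ'def
  have hφderiv : ∀ u ∈ Ici s, HasDerivWithinAt φ (φ' u) (Ici s) u := by
    intro u hu
    rw [hφdef, hφ'def]
    apply HasDerivWithinAt.fun_sum
    intro i _
    apply HasDerivWithinAt.fun_sum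
    intro j _
    have h := (hH u hu i j).fun_pow 2
    convert h using 1
    · rfl
    push_cast
    ring
  -- derivative bound for φ
  have hφ'le : ∀ u ∈ Ici s, φ' u ≤
      2 * (C * Real.exp (-(2*lam*(u-s)))) * Real.sqrt (φ u) - 2*lam*(φ u) := by
    intro u hu
    have hsplit : φ' u = 2 * (∑ i, ∑ j, H u i j * G u i j)
        + 2 * (∑ i, ∑ j, H u i j * (H u * A u) i j) := by
      simp only [hφ'def, Matrix.add_apply, mul_add, Finset.sum_add_distrib, Finset.mul_sum]
      congr 1 <;> exact Finset.sum_congr rfl fun i _ => Finset.sum_congr rfl fun j _ => by ring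
    have hCS : ∑ i, ∑ j, H u i j * G u i j ≤
        Real.sqrt (φ u) * Real.sqrt (∑ i, ∑ j, (G u i j)^2) := by
      have h := Real.sum_mul_le_sqrt_mul_sqrt (Finset.univ : Finset (Fin m × Fin r))
        (fun q => H u q.1 q.2) (fun q => G u q.1 q.2)
      simpa [Fintype.sum_prod_type, hφdef] using h
    have hCS2 : ∑ i, ∑ j, H u i j * G u i j ≤
        Real.sqrt (φ u) * (C * Real.exp (-(2*lam*(u-s)))) := by
      refine hCS.trans ?_
      exact mul_le_mul_of_nonneg_left (hGbd u hu) (Real.sqrt_nonneg _)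
    have hquad : ∑ i, ∑ j, H u i j * (H u * A u) i j ≤ -lam * φ u := by
      rw [hφdef, Finset.mul_sum]
      apply Finset.sum_le_sum
      intro i _
      have h := hlog u hu (fun k => H u i k)
      simp only [dotProduct, Matrix.mulVec] at h
      calc ∑ j, H u i j * (H u * A u) i j
          = ∑ j, H u i j * ∑ k, H u i k * A u k j := by simp [Matrix.mul_apply]
        _ = ∑ k, H u i k * ∑ j, A u k j * H u i j := by
            simp_rw [Finset.mul_sum]
            rw [Finset.sum_comm]
            exact Finset.sum_congr rfl fun k _ => Finset.sum_congr rfl fun j _ => by ring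
        _ ≤ -lam * ∑ j, H u i j * H u i j := h
        _ = -lam * ∑ j, (H u i j)^2 := by simp [sq]
    rw [hsplit]
    nlinarith [hCS2, hquad]
  intro t ht
  refine le_of_forall_pos_le_add ?_
  intro δ hδ
  set ε : ℝ := δ * Real.exp (lam*(t-s)) with hεdef
  have hε : 0 < ε := mul_pos hδ (Real.exp_pos _)
  -- rescaled quantity p
  set p : ℝ → ℝ := fun u => Real.exp (2*lam*(u-s)) * φ u with hpdef
  set p' : ℝ → ℝ := fun u =>
    2*lam*Real.exp (2*lam*(u-s)) * φ u + Real.exp (2*lam*(u-s)) * φ' u with hp'def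
  have hp0 : ∀ u, 0 ≤ p u := fun u => mul_nonneg (Real.exp_pos _).le (hφ0 u)
  have hpderiv : ∀ u ∈ Ici s, HasDerivWithinAt p (p' u) (Ici s) u := by
    intro u hu
    have h1 : HasDerivAt (fun v : ℝ => 2*lam*(v-s)) (2*lam) u := by
      simpa using ((hasDerivAt_id u).sub_const s).const_mul (2*lam)
    have h2 : HasDerivAt (fun v => Real.exp (2*lam*(v-s)))
        (Real.exp (2*lam*(u-s)) * (2*lam)) u := h1.exp
    have := (h2.hasDerivWithinAt).fun_mul (hφderiv u hu)
    convert this using 1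
    · rfl
    · rfl
    simp only [hp'def]
    ring
  have hps : p s = 0 := by simp [hpdef, hφdef, hHs]
  have hpos : ∀ u, 0 < p u + ε^2 := fun u => by positivity
  have hkey : ∀ u, (Real.exp (-(lam*(u-s))))^2 * p u = φ u := by
    intro u
    simp only [hpdef]
    rw [sq, ← Real.exp_add, ← mul_assoc, ← Real.exp_add,
      show (-(lam*(u-s)) + -(lam*(u-s))) + 2*lam*(u-s) = 0 by ring, Real.exp_zero, one_mul]
  -- derivative bound for p
  have hp'le : ∀ u ∈ Ici s, p' u ≤
      2*C*Real.exp (-(lam*(u-s))) * Real.sqrt (p u + ε^2) := by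
    intro u hu
    have h1 : p' u = Real.exp (2*lam*(u-s)) * (2*lam*φ u + φ' u) := by
      simp only [hp'def]; ring
    have h2 : 2*lam*φ u + φ' u ≤ 2*(C*Real.exp (-(2*lam*(u-s))))*Real.sqrt (φ u) := by
      linarith [hφ'le u hu]
    have h3 : p' u ≤ 2*C*Real.sqrt (φ u) := by
      rw [h1]
      calc Real.exp (2*lam*(u-s)) * (2*lam*φ u + φ' u)
          ≤ Real.exp (2*lam*(u-s)) * (2*(C*Real.exp (-(2*lam*(u-s))))*Real.sqrt (φ u)) :=
            mul_le_mul_of_nonneg_left h2 (Real.exp_pos _).le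
        _ = 2*C*(Real.exp (2*lam*(u-s)) * Real.exp (-(2*lam*(u-s))))*Real.sqrt (φ u) := by ring
        _ = 2*C*Real.sqrt (φ u) := by rw [← Real.exp_add]; simp
    have h4 : Real.sqrt (φ u) ≤ Real.exp (-(lam*(u-s))) * Real.sqrt (p u + ε^2) := by
      have hle : φ u ≤ (Real.exp (-(lam*(u-s))))^2 * (p u + ε^2) := by
        have he := hkey u
        nlinarith [sq_nonneg (Real.exp (-(lam*(u-s)))), hε.le, sq_nonneg ε,
          mul_nonneg (sq_nonneg (Real.exp (-(lam*(u-s))))) (sq_nonneg ε)]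
      calc Real.sqrt (φ u) ≤ Real.sqrt ((Real.exp (-(lam*(u-s))))^2 * (p u + ε^2)) :=
            Real.sqrt_le_sqrt hle
        _ = Real.exp (-(lam*(u-s))) * Real.sqrt (p u + ε^2) := by
            rw [Real.sqrt_mul (sq_nonneg _), Real.sqrt_sq (Real.exp_pos _).le]
    calc p' u ≤ 2*C*Real.sqrt (φ u) := h3
      _ ≤ 2*C*(Real.exp (-(lam*(u-s))) * Real.sqrt (p u + ε^2)) := by
          apply mul_le_mul_of_nonneg_left h4; positivity
      _ = 2*C*Real.exp (-(lam*(u-s))) * Real.sqrt (p u + ε^2) := by ring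
  -- the comparison function
  set w : ℝ → ℝ := fun u => Real.sqrt (p u + ε^2) with hwdef
  have hw0 : ∀ u, 0 < w u := fun u => Real.sqrt_pos.2 (hpos u)
  set D : ℝ → ℝ := fun u => w u + (C/lam) * Real.exp (-(lam*(u-s))) with hDdef
  set D' : ℝ → ℝ := fun u =>
    p' u / (2 * w u) - C * Real.exp (-(lam*(u-s))) with hD'def
  have hDderiv : ∀ u ∈ Ici s, HasDerivWithinAt D (D' u) (Ici s) u := by
    intro u hu
    have hw' : HasDerivWithinAt w (p' u / (2 * w u)) (Ici s) u :=
      ((hpderiv u hu).add_const (ε^2)).sqrt (ne_of_gt (hpos u))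
    have h1 : HasDerivAt (fun v : ℝ => -(lam*(v-s))) (-lam) u := by
      simpa [Pi.neg_def] using (((hasDerivAt_id u).sub_const s).const_mul lam).neg
    have h2 : HasDerivAt (fun v => (C/lam) * Real.exp (-(lam*(v-s))))
        ((C/lam) * (Real.exp (-(lam*(u-s))) * (-lam))) u := (h1.exp).const_mul _
    have := hw'.fun_add h2.hasDerivWithinAt
    convert this using 1
    · rfl
    · rfl
    simp only [hD'def]
    field_simp
    ring
  have hD'le : ∀ u ∈ Ici s, D' u ≤ 0 := by
    intro u hu
    simp only [hD'def, sub_nonpos]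
    rw [div_le_iff₀ (by positivity : (0:ℝ) < 2 * w u)]
    calc p' u ≤ 2*C*Real.exp (-(lam*(u-s))) * Real.sqrt (p u + ε^2) := hp'le u hu
      _ = C * Real.exp (-(lam*(u-s))) * (2 * w u) := by rw [hwdef]; ring
  have hant : AntitoneOn D (Ici s) := by
    apply antitoneOn_of_deriv_nonpos (convex_Ici s)
    · intro u hu; exact (hDderiv u hu).continuousWithinAt
    · intro u hu
      rw [interior_Ici] at hu
      exact ((hDderiv u (show s ≤ u from le_of_lt hu)).hasDerivAt
        (Ici_mem_nhds hu)).differentiableAt.differentiableWithinAt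
    · intro u hu
      rw [interior_Ici] at hu
      rw [((hDderiv u (show s ≤ u from le_of_lt hu)).hasDerivAt (Ici_mem_nhds hu)).deriv]
      exact hD'le u (show s ≤ u from le_of_lt hu)
  have hDts : D t ≤ D s := hant self_mem_Ici ht ht
  have hDs : D s = ε + C/lam := by
    simp [hDdef, hwdef, hps, Real.sqrt_sq hε.le]
  -- conclude
  have hwt : w t ≤ ε + C/lam := by
    have h0 : 0 ≤ (C/lam) * Real.exp (-(lam*(t-s))) := by positivity
    have := hDts
    rw [hDs] at this
    simp only [hDdef] at this
    linarith
  have hfin : Real.sqrt (φ t) ≤ Real.exp (-(lam*(t-s))) * w t := by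
    have hle : φ t ≤ (Real.exp (-(lam*(t-s))))^2 * (p t + ε^2) := by
      have he := hkey t
      nlinarith [mul_nonneg (sq_nonneg (Real.exp (-(lam*(t-s))))) (sq_nonneg ε)]
    calc Real.sqrt (φ t) ≤ Real.sqrt ((Real.exp (-(lam*(t-s))))^2 * (p t + ε^2)) :=
          Real.sqrt_le_sqrt hle
      _ = Real.exp (-(lam*(t-s))) * w t := by
          rw [Real.sqrt_mul (sq_nonneg _), Real.sqrt_sq (Real.exp_pos _).le, hwdef]
  calc Real.sqrt (φ t) ≤ Real.exp (-(lam*(t-s))) * w t := hfin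
    _ ≤ Real.exp (-(lam*(t-s))) * (ε + C/lam) :=
        mul_le_mul_of_nonneg_left hwt (Real.exp_pos _).le
    _ = (C/lam) * Real.exp (-lam*(t-s)) + δ := by
        have h2 : Real.exp (-(lam*(t-s))) * ε = δ := by
          rw [hεdef, mul_comm δ, ← mul_assoc, ← Real.exp_add,
            show -(lam*(t-s)) + lam*(t-s) = 0 by ring, Real.exp_zero, one_mul]
        rw [neg_mul, mul_add, h2]
        ring
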